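/- The element Λ = κ^{2p} # k^{2p} of the Heisenberg double H(B*) of the dual Taft algebra satisfies Λ·(F^a κ^b # E^c k^d) = (−1)^b F^a κ^{b+2p} # E^c k^{d+2p} and (F^a κ^b # E^c k^d)·Λ = (−1)^d F^a κ^{b+2p} # E^c k^{d+2p}; consequently Λ is central in the subalgebra spanned by Ψ^{a,b,c} = F^a κ^b # E^c k^{b−2c} (where b ≡ d + 2c ensures (−1)^b = (−1)^d), though not central in all of H(B*). -/

import Mathlib

/-!
STATEMENT 11: In the Heisenberg double `H(B*)` of the dual Taft algebra, the element
`Λ = κ^{2p} # k^{2p}` satisfies `Λ·(F^a κ^b # E^c k^d) = (−1)^b F^a κ^{b+2p} # E^c k^{d+2p}`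
and `(F^a κ^b # E^c k^d)·Λ = (−1)^d F^a κ^{b+2p} # E^c k^{d+2p}`; consequently `Λ` commutes
with every `Ψ^{a,b,c} = F^a κ^b # E^c k^{b−2c}`.
-/
noncomputable section

/-- The q-integer `[n]_q`. -/
def qint (q : ℂ) (n : ℕ) : ℂ := (q ^ n - q⁻¹ ^ n) / (q - q⁻¹)

/-- The q-factorial. -/
def qfac (q : ℂ) : ℕ → ℂ
  | 0 => 1
  | n + 1 => qint q (n + 1) * qfac q n

/-- Symmetric Gaussian binomial via the q-Pascal recursion. -/
def qbinom (q : ℂ) : ℕ → ℕ → ℂ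
  | _, 0 => 1
  | 0, _ + 1 => 0
  | n + 1, k + 1 => q ^ (k + 1) * qbinom q n (k + 1) + q⁻¹ ^ (n - k) * qbinom q n k

/-- The underlying space of `H(B*)`: the free module on the basis
`F^a κ^b # E^c k^d`, `0 ≤ a, c ≤ p−1`, `b, d ∈ ℤ/4pℤ`. -/
abbrev HDSpace (p : ℕ) : Type :=
  (Fin p × ZMod (4 * p) × Fin p × ZMod (4 * p)) →₀ ℂ

/-- The basis vector `F^x κ^y # E^z k^w`, declared to vanish when `x ≥ p` or `z ≥ p`
(the relations `F^p = 0`, `E^p = 0`). -/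
def belem (p : ℕ) (x : ℕ) (y : ZMod (4 * p)) (z : ℕ) (w : ZMod (4 * p)) : HDSpace p :=
  if hx : x < p then
    if hz : z < p then Finsupp.single (⟨x, hx⟩, y, ⟨z, hz⟩, w) 1 else 0
  else 0

theorem heisenberg_double_Lambda
    (p : ℕ) (hp : 2 ≤ p)
    (q q2 : ℂ)
    (hq : q = Complex.exp (Real.pi * Complex.I / p))
    (hq2 : q2 = Complex.exp (Real.pi * Complex.I / (2 * p)))
    -- `hm` is the Heisenberg double multiplication, given on the basis by the
    -- smash-product formula:
    (hm : HDSpace p →ₗ[ℂ] HDSpace p →ₗ[ℂ] HDSpace p)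
    (hm_def : ∀ (r m a c : ℕ) (_ : r < p) (_ : m < p) (_ : a < p) (_ : c < p)
        (s n b d : ZMod (4 * p)),
      hm (belem p r s m n) (belem p a b c d)
        = ∑ u ∈ Finset.range (min m a + 1),
            (q2 ^ (-(u * ((u : ℤ) - 1))
                  - (b.val : ℤ) * n.val + 2 * c * n.val
                  + 2 * a * ((s.val : ℤ) - n.val)
                  + 2 * u * (2 * (c : ℤ) - a - b.val + m - s.val) : ℤ)
              * qbinom q m u * qbinom q a u * qfac q u * ((q - q⁻¹) ^ u)⁻¹)
            • belem p (a + r - u) (b + s) (m + c - u) (n + d + (2 * u : ℕ)))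
    (Λ : HDSpace p) (hΛ : Λ = belem p 0 (2 * p : ℕ) 0 (2 * p : ℕ)) :
    (∀ (a c : ℕ) (_ : a < p) (_ : c < p) (b d : ZMod (4 * p)),
      hm Λ (belem p a b c d)
        = ((-1 : ℂ) ^ b.val) • belem p a (b + (2 * p : ℕ)) c (d + (2 * p : ℕ))) ∧
    (∀ (a c : ℕ) (_ : a < p) (_ : c < p) (b d : ZMod (4 * p)),
      hm (belem p a b c d) Λ
        = ((-1 : ℂ) ^ d.val) • belem p a (b + (2 * p : ℕ)) c (d + (2 * p : ℕ))) ∧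
    (∀ (a c : ℕ) (_ : a < p) (_ : c < p) (b : ZMod (4 * p)),
      hm Λ (belem p a b c (b - 2 * (c : ℕ)))
        = hm (belem p a b c (b - 2 * (c : ℕ))) Λ) := by

  haveI : NeZero (4 * p) := ⟨by omega⟩
  have hq2ne : q2 ≠ 0 := by rw [hq2]; exact Complex.exp_ne_zero _
  have hpC : (p : ℂ) ≠ 0 := Nat.cast_ne_zero.mpr (by omega)
  have hK : q2 ^ (2 * p) = -1 := by
    rw [hq2, ← Complex.exp_nat_mul]
    rw [show ((2 * p : ℕ) : ℂ) * (Real.pi * Complex.I / (2 * p)) = Real.pi * Complex.I by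
      push_cast; field_simp]
    exact Complex.exp_pi_mul_I
  have hKz : ∀ t : ℤ, q2 ^ (((2 * p : ℕ) : ℤ) * t) = (-1 : ℂ) ^ t := by
    intro t; rw [zpow_mul, zpow_natCast, hK]
  have hneg2 : ∀ s t : ℕ, (-1 : ℂ) ^ (2 * (s : ℤ) - t) = (-1) ^ t := by
    intro s t
    rw [zpow_sub₀ (by norm_num : (-1 : ℂ) ≠ 0), zpow_mul]
    norm_num
    rw [← inv_pow, inv_neg, inv_one]
  have hval2p : ((2 * p : ℕ) : ZMod (4 * p)).val = 2 * p :=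
    ZMod.val_natCast_of_lt (by omega)
  have part1 : ∀ (a c : ℕ) (_ : a < p) (_ : c < p) (b d : ZMod (4 * p)),
      hm Λ (belem p a b c d)
        = ((-1 : ℂ) ^ b.val) • belem p a (b + (2 * p : ℕ)) c (d + (2 * p : ℕ)) := by
    intro a c ha hc b d
    rw [hΛ, hm_def 0 0 a c (by omega) (by omega) ha hc]
    simp only [Nat.zero_min, zero_add, Finset.sum_range_one, hval2p, qbinom, qfac,
      Nat.cast_zero, Nat.add_zero, Nat.zero_add, Nat.sub_zero, Nat.mul_zero, mul_one,
      pow_zero, inv_one, add_zero]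
    rw [add_comm ((2 * p : ℕ) : ZMod (4 * p)) d]
    congr 1
    rw [← hneg2 c b.val, ← hKz (2 * (c : ℤ) - (b.val : ℤ))]
    congr 1
    push_cast
    ring
  have part2 : ∀ (a c : ℕ) (_ : a < p) (_ : c < p) (b d : ZMod (4 * p)),
      hm (belem p a b c d) Λ
        = ((-1 : ℂ) ^ d.val) • belem p a (b + (2 * p : ℕ)) c (d + (2 * p : ℕ)) := by
    intro a c ha hc b d
    rw [hΛ, hm_def a c 0 0 ha hc (by omega) (by omega)]
    simp only [Nat.min_zero, zero_add, Finset.sum_range_one, hval2p, qbinom, qfac,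
      Nat.cast_zero, Nat.add_zero, Nat.zero_add, Nat.sub_zero, Nat.mul_zero, mul_one,
      pow_zero, inv_one, add_zero]
    rw [add_comm ((2 * p : ℕ) : ZMod (4 * p)) b]
    congr 1
    rw [← hneg2 0 d.val, ← hKz (2 * (((0:ℕ)) : ℤ) - (d.val : ℤ))]
    congr 1
    push_cast
    ring
  refine ⟨part1, part2, ?_⟩
  intro a c ha hc b
  rw [part1 a c ha hc b _, part2 a c ha hc b _]
  have hpar : (b - (2 * c : ℕ)).val % 2 = b.val % 2 := by
    have h1 : ((b - (2 * c : ℕ)) + (2 * c : ℕ) : ZMod (4 * p)) = b := by ring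
    have h2 : b.val = ((b - (2 * c : ℕ)).val + ((2 * c : ℕ) : ZMod (4 * p)).val) % (4 * p) := by
      conv_lhs => rw [← h1]
      rw [ZMod.val_add]
    have h3 : ((2 * c : ℕ) : ZMod (4 * p)).val = 2 * c % (4 * p) := ZMod.val_natCast _ _
    rw [h3] at h2
    have h4 : (((b - (2 * c : ℕ)).val + 2 * c % (4 * p)) % (4 * p)) % 2
        = ((b - (2 * c : ℕ)).val + 2 * c % (4 * p)) % 2 :=
      Nat.mod_mod_of_dvd _ ⟨2 * p, by ring⟩
    have h5 : (2 * c % (4 * p)) % 2 = 0 := by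
      have : (2 * c % (4 * p)) % 2 = (2 * c) % 2 := Nat.mod_mod_of_dvd _ ⟨2 * p, by ring⟩
      omega
    omega
  have hpow : ∀ m n : ℕ, m % 2 = n % 2 → (-1 : ℂ) ^ m = (-1) ^ n := by
    intro m n h
    rw [← Nat.div_add_mod m 2, ← Nat.div_add_mod n 2, pow_add, pow_add, pow_mul, pow_mul]
    norm_num [h]
  rw [hpow b.val (b - (2 * c : ℕ)).val hpar.symm]
  norm_cast
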